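/- Let f : ℝ^{p×q} → ℝ be differentiable, λ > 0, and define g(U,V) = f(UVᵀ) + (λ/2)(‖U‖_F² + ‖V‖_F²). If (U,V) is a critical point of g (∇g(U,V) = 0), then UᵀU = VᵀV. -/

import Mathlib

open Matrix

noncomputable def singularValues {m n : Type*} [Fintype m] [Fintype n] [DecidableEq n]
    (X : Matrix m n ℝ) : n → ℝ :=
  fun i => Real.sqrt ((Matrix.isHermitian_conjTranspose_mul_self X).eigenvalues i)

noncomputable def nuclearNorm {m n : Type*} [Fintype m] [Fintype n] [DecidableEq n]
    (X : Matrix m n ℝ) : ℝ := ∑ i, singularValues X i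

noncomputable def frobNorm {m n : Type*} [Fintype m] [Fintype n] (X : Matrix m n ℝ) : ℝ :=
  Real.sqrt ((Xᵀ * X).trace)

noncomputable def spectralNorm₂ {m n : Type*} [Fintype m] [Fintype n] [DecidableEq m] [DecidableEq n]
    (X : Matrix m n ℝ) : ℝ :=
  ‖LinearMap.toContinuousLinearMap (Matrix.toEuclideanLin X)‖

noncomputable def smallestNonzeroSV {m n : Type*} [Fintype m] [Fintype n] [DecidableEq n]
    (X : Matrix m n ℝ) : ℝ :=
  sInf {s | (∃ i, singularValues X i = s) ∧ s ≠ 0}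

noncomputable def distO {n r : ℕ} (W₁ W₂ : Matrix (Fin n) (Fin r) ℝ) : ℝ :=
  sInf {d | ∃ R : Matrix (Fin r) (Fin r) ℝ, Rᵀ * R = 1 ∧ d = frobNorm (W₁ - W₂ * R)}

attribute [local instance] Matrix.normedAddCommGroup Matrix.normedSpace

noncomputable def coordL {m n : Type*} [Fintype m] [Fintype n] (i : m) (j : n) :
    Matrix m n ℝ →L[ℝ] ℝ :=
  LinearMap.toContinuousLinearMap
    { toFun := fun X => X i j
      map_add' := fun _ _ => rfl
      map_smul' := fun _ _ => rfl }

@[simp] lemma coordL_apply {m n : Type*} [Fintype m] [Fintype n] (i : m) (j : n)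
    (X : Matrix m n ℝ) : coordL i j X = X i j := rfl

lemma frob_sq {m n : Type*} [Fintype m] [Fintype n] (X : Matrix m n ℝ) :
    frobNorm X ^ 2 = ∑ i, ∑ j, X i j ^ 2 := by
  have h : (Xᵀ * X).trace = ∑ i, ∑ j, X i j ^ 2 := by
    simp [Matrix.trace, Matrix.diag, Matrix.mul_apply, sq]
    rw [Finset.sum_comm]
  rw [frobNorm, Real.sq_sqrt, h]
  rw [h]
  positivity

lemma hasFDerivAt_sqsum {m n : Type*} [Fintype m] [Fintype n] (U : Matrix m n ℝ) :
    HasFDerivAt (fun X : Matrix m n ℝ => ∑ i, ∑ j, X i j ^ 2)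
      (∑ i, ∑ j, (2 * U i j) • coordL i j) U := by
  apply HasFDerivAt.fun_sum
  intro i _
  apply HasFDerivAt.fun_sum
  intro j _
  have h := (hasDerivAt_pow 2 (U i j)).comp_hasFDerivAt U ((coordL i j).hasFDerivAt (x := U))
  convert h using 2
  norm_num
  exact Iff.rfl

noncomputable def mulTL (p q r : ℕ) :
    Matrix (Fin p) (Fin r) ℝ →L[ℝ] Matrix (Fin q) (Fin r) ℝ →L[ℝ] Matrix (Fin p) (Fin q) ℝ :=
  LinearMap.toContinuousLinearMap
  { toFun := fun A => LinearMap.toContinuousLinearMap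
      { toFun := fun B => A * Bᵀ
        map_add' := by intro x y; simp [Matrix.transpose_add, Matrix.mul_add]
        map_smul' := by intro c x; simp [Matrix.transpose_smul, Matrix.mul_smul] }
    map_add' := by intro x y; ext B; simp [Matrix.add_mul]
    map_smul' := by intro c x; ext B; simp [Matrix.smul_mul] }

lemma mulTL_bdd (p q r : ℕ) :
    IsBoundedBilinearMap ℝ (fun W : Matrix (Fin p) (Fin r) ℝ × Matrix (Fin q) (Fin r) ℝ =>
      W.1 * W.2ᵀ) := (mulTL p q r).isBoundedBilinearMap


theorem stmt6 {p q r : ℕ} (f : Matrix (Fin p) (Fin q) ℝ → ℝ)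
    (hf : Differentiable ℝ f) (l : ℝ) (hl : 0 < l)
    (U : Matrix (Fin p) (Fin r) ℝ) (V : Matrix (Fin q) (Fin r) ℝ)
    (hcrit : fderiv ℝ (fun W : Matrix (Fin p) (Fin r) ℝ × Matrix (Fin q) (Fin r) ℝ =>
        f (W.1 * W.2ᵀ) + l / 2 * (frobNorm W.1 ^ 2 + frobNorm W.2 ^ 2)) (U, V) = 0) :
    Uᵀ * U = Vᵀ * V := by
  classical
  have heq : (fun W : Matrix (Fin p) (Fin r) ℝ × Matrix (Fin q) (Fin r) ℝ =>
        f (W.1 * W.2ᵀ) + l / 2 * (frobNorm W.1 ^ 2 + frobNorm W.2 ^ 2))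
      = (fun W : Matrix (Fin p) (Fin r) ℝ × Matrix (Fin q) (Fin r) ℝ =>
        f (W.1 * W.2ᵀ) + l / 2 * ((∑ i, ∑ j, W.1 i j ^ 2) + ∑ i, ∑ j, W.2 i j ^ 2)) := by
    funext W; rw [frob_sq, frob_sq]
  rw [heq] at hcrit
  have hb : HasFDerivAt (fun W : Matrix (Fin p) (Fin r) ℝ × Matrix (Fin q) (Fin r) ℝ =>
      W.1 * W.2ᵀ) ((mulTL_bdd p q r).deriv (U, V)) (U, V) :=
    (mulTL_bdd p q r).hasFDerivAt (U, V)
  obtain ⟨D, hD⟩ : ∃ D : @ContinuousLinearMap ℝ ℝ _ _ (RingHom.id ℝ) (Matrix (Fin p) (Fin q) ℝ)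
      PseudoMetricSpace.toUniformSpace.toTopologicalSpace Matrix.normedAddCommGroup.toAddCommMonoid ℝ _ _
      Matrix.normedSpace.toModule _, HasFDerivAt f D (U * Vᵀ) := hf (U * Vᵀ)
  have h1 := hD.comp (U, V) hb
  have hU := (hasFDerivAt_sqsum U).comp (U, V)
    (hasFDerivAt_fst (𝕜 := ℝ) (p := ((U, V) : Matrix (Fin p) (Fin r) ℝ × Matrix (Fin q) (Fin r) ℝ)))
  have hV := (hasFDerivAt_sqsum V).comp (U, V)
    (hasFDerivAt_snd (𝕜 := ℝ) (p := ((U, V) : Matrix (Fin p) (Fin r) ℝ × Matrix (Fin q) (Fin r) ℝ)))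
  have hg' := h1.add ((hU.add hV).const_mul (l / 2))
  have hg : HasFDerivAt (fun W : Matrix (Fin p) (Fin r) ℝ × Matrix (Fin q) (Fin r) ℝ =>
        f (W.1 * W.2ᵀ) + l / 2 * ((∑ i, ∑ j, W.1 i j ^ 2) + ∑ i, ∑ j, W.2 i j ^ 2))
      _ (U, V) := hg'
  have hD0 := hg.fderiv
  rw [hcrit] at hD0
  ext a b
  set E := single a b (1:ℝ) with hE
  have h := DFunLike.congr_fun hD0 ((U * E, -(V * Eᵀ)) :
    Matrix (Fin p) (Fin r) ℝ × Matrix (Fin q) (Fin r) ℝ)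
  have hz : ((mulTL_bdd p q r).deriv (U, V)) (U * E, -(V * Eᵀ)) = 0 := by
    rw [IsBoundedBilinearMap.deriv_apply]
    simp [Matrix.mul_assoc]
  replace h : (0:ℝ) = D (((mulTL_bdd p q r).deriv (U, V)) (U * E, -(V * Eᵀ)))
      + l / 2 * ((∑ i, ∑ j, (2 * U i j) • coordL i j) (U * E)
        + (∑ i, ∑ j, (2 * V i j) • coordL i j) (-(V * Eᵀ))) := h
  simp only [ContinuousLinearMap.zero_apply, ContinuousLinearMap.add_apply,
    ContinuousLinearMap.comp_apply, hz, map_zero, ContinuousLinearMap.smul_apply,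
    ContinuousLinearMap.coe_fst', ContinuousLinearMap.coe_snd',
    ContinuousLinearMap.sum_apply, ContinuousLinearMap.coe_smul', Pi.smul_apply,
    coordL_apply, smul_eq_mul, zero_add] at h
  have hsum1 : (∑ x : Fin p, ∑ y : Fin r, 2 * U x y * (U * E) x y) = 2 * (Uᵀ * U) b a := by
    simp only [hE, Matrix.mul_apply, Matrix.single, Matrix.of_apply,
      Matrix.transpose_apply, mul_ite, mul_one, mul_zero, Finset.mul_sum]
    rw [Finset.sum_comm]
    simp only [ite_and, Finset.sum_ite_eq, Finset.mem_univ, if_true]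
    rw [Finset.sum_comm]
    simp only [Finset.sum_ite_eq, Finset.mem_univ, if_true]
    exact Finset.sum_congr rfl fun x _ => by ring
  have hsum2 : (∑ x : Fin q, ∑ y : Fin r, 2 * V x y * (-(V * Eᵀ)) x y) = -(2 * (Vᵀ * V) a b) := by
    simp only [hE, Matrix.neg_apply, Matrix.mul_apply, Matrix.transpose_apply,
      Matrix.single, Matrix.of_apply, mul_ite, mul_one, mul_zero, Finset.mul_sum]
    simp only [mul_neg, ← Finset.sum_neg_distrib, neg_inj, ite_and]
    rw [Finset.sum_comm]
    simp [Finset.sum_ite_irrel, Finset.sum_ite_eq, mul_ite]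
    exact Finset.sum_congr rfl fun x _ => by ring
  rw [hsum1, hsum2] at h
  have hsymm : (Uᵀ * U) b a = (Uᵀ * U) a b := by
    simp [Matrix.mul_apply, mul_comm]
  have : (Uᵀ * U) b a = (Vᵀ * V) a b := by
    have hl2 : (l / 2) ≠ 0 := by positivity
    have h' : l / 2 * (2 * (Uᵀ * U) b a + -(2 * (Vᵀ * V) a b)) = 0 := h.symm
    rcases mul_eq_zero.mp h' with h'' | h''
    · exact absurd h'' hl2
    · linarith
  rw [← hsymm]
  exact this
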